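/- Let C be a formally self-orthogonal linear [n,k,d] code over F_q with 2d ≤ n+1. Let p_i = dim P_i(C) and f_i = dim F_i(C). Then for all 0 ≤ i ≤ j ≤ n one has (p_j - p_i) + (f_i - f_j) ≤ j - i. -/

import Mathlib

set_option synthInstance.maxHeartbeats 1000000
set_option maxHeartbeats 1000000
set_option linter.unusedSectionVars false




variable {F : Type*} [Field F] [Fintype F] [DecidableEq F] {n : ℕ}

/-- The `i`-th past subcode: codewords of `C` vanishing on coordinates `i+1, …, n`
(identified as a subspace of `F^n` supported on the first `i` coordinates). -/
def pastCode (C : Submodule F (Fin n → F)) (i : ℕ) : Submodule F (Fin n → F) where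
  carrier := {c | c ∈ C ∧ ∀ j : Fin n, i ≤ (j : ℕ) → c j = 0}
  add_mem' := fun {a b} ha hb => ⟨C.add_mem ha.1 hb.1,
    fun j hj => by simp [Pi.add_apply, ha.2 j hj, hb.2 j hj]⟩
  zero_mem' := ⟨C.zero_mem, fun j _ => rfl⟩
  smul_mem' := fun c {x} hx => ⟨C.smul_mem c hx.1,
    fun j hj => by simp [Pi.smul_apply, hx.2 j hj]⟩

/-- The `i`-th future subcode: codewords of `C` vanishing on coordinates `1, …, i`. -/
def futureCode (C : Submodule F (Fin n → F)) (i : ℕ) : Submodule F (Fin n → F) where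
  carrier := {c | c ∈ C ∧ ∀ j : Fin n, (j : ℕ) < i → c j = 0}
  add_mem' := fun {a b} ha hb => ⟨C.add_mem ha.1 hb.1,
    fun j hj => by simp [Pi.add_apply, ha.2 j hj, hb.2 j hj]⟩
  zero_mem' := ⟨C.zero_mem, fun j _ => rfl⟩
  smul_mem' := fun c {x} hx => ⟨C.smul_mem c hx.1,
    fun j hj => by simp [Pi.smul_apply, hx.2 j hj]⟩

/-- The dual code with respect to the standard bilinear form. -/
def dualCode (C : Submodule F (Fin n → F)) : Submodule F (Fin n → F) where
  carrier := {y | ∀ c ∈ C, ∑ j, y j * c j = 0}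
  add_mem' := fun {a b} ha hb c hc => by
    simp [Pi.add_apply, add_mul, Finset.sum_add_distrib, ha c hc, hb c hc]
  zero_mem' := fun c _ => by simp
  smul_mem' := fun t {x} hx c hc => by
    simp [Pi.smul_apply, mul_assoc, ← Finset.mul_sum, hx c hc]

/-- `C` is formally self-orthogonal: `C ⊆ x * C^⊥` for some tuple `x` of
nonzero field elements, with `*` the coordinatewise multiplication. -/
def FormallySelfOrthogonal (C : Submodule F (Fin n → F)) : Prop :=
  ∃ x : Fin n → F, (∀ j, x j ≠ 0) ∧
    ∀ c ∈ C, ∃ y ∈ dualCode C, c = fun j => x j * y j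

lemma mem_pastCode {C : Submodule F (Fin n → F)} {i : ℕ} {c : Fin n → F} :
    c ∈ pastCode C i ↔ c ∈ C ∧ ∀ j : Fin n, i ≤ (j : ℕ) → c j = 0 := Iff.rfl

lemma mem_futureCode {C : Submodule F (Fin n → F)} {i : ℕ} {c : Fin n → F} :
    c ∈ futureCode C i ↔ c ∈ C ∧ ∀ j : Fin n, (j : ℕ) < i → c j = 0 := Iff.rfl

lemma pastCode_mono (C : Submodule F (Fin n → F)) (i : ℕ) :
    pastCode C i ≤ pastCode C (i + 1) :=
  fun c hc => ⟨hc.1, fun j hj => hc.2 j (by omega)⟩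

lemma futureCode_mono (C : Submodule F (Fin n → F)) (i : ℕ) :
    futureCode C (i + 1) ≤ futureCode C i :=
  fun c hc => ⟨hc.1, fun j hj => hc.2 j (by omega)⟩

-- rank nullity step for past
lemma past_step (C : Submodule F (Fin n → F)) (i : ℕ) (hi : i < n) :
    Module.finrank F (pastCode C (i + 1)) ≤ Module.finrank F (pastCode C i) + 1 := by
  classical
  set φ : (pastCode C (i + 1)) →ₗ[F] F :=
    (LinearMap.proj (⟨i, hi⟩ : Fin n)).comp (pastCode C (i + 1)).subtype with hφ
  have hker : LinearMap.ker φ = (pastCode C i).comap (pastCode C (i + 1)).subtype := by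
    ext ⟨c, hc⟩
    simp only [LinearMap.mem_ker, hφ, LinearMap.comp_apply, Submodule.subtype_apply,
      LinearMap.proj_apply, Submodule.mem_comap, mem_pastCode]
    constructor
    · intro h0
      refine ⟨hc.1, fun j hj => ?_⟩
      rcases eq_or_lt_of_le hj with h | h
      · have : j = ⟨i, hi⟩ := Fin.ext h.symm
        rw [this]; exact h0
      · exact hc.2 j (by omega)
    · intro h; exact h.2 ⟨i, hi⟩ le_rfl
  have h1 := LinearMap.finrank_range_add_finrank_ker φ
  have h2 : Module.finrank F (LinearMap.ker φ) = Module.finrank F (pastCode C i) := by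
    rw [hker]
    exact (Submodule.comapSubtypeEquivOfLe (pastCode_mono C i)).finrank_eq
  have h3 : Module.finrank F (LinearMap.range φ) ≤ 1 := by
    have := Submodule.finrank_le (LinearMap.range φ)
    simpa using this
  omega

lemma future_step (C : Submodule F (Fin n → F)) (i : ℕ) (hi : i < n) :
    Module.finrank F (futureCode C i) ≤ Module.finrank F (futureCode C (i + 1)) + 1 := by
  classical
  set φ : (futureCode C i) →ₗ[F] F :=
    (LinearMap.proj (⟨i, hi⟩ : Fin n)).comp (futureCode C i).subtype with hφ
  have hker : LinearMap.ker φ = (futureCode C (i + 1)).comap (futureCode C i).subtype := by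
    ext ⟨c, hc⟩
    simp only [LinearMap.mem_ker, hφ, LinearMap.comp_apply, Submodule.subtype_apply,
      LinearMap.proj_apply, Submodule.mem_comap, mem_futureCode]
    constructor
    · intro h0
      refine ⟨hc.1, fun j hj => ?_⟩
      rcases Nat.lt_or_ge (j : ℕ) i with h | h
      · exact hc.2 j h
      · have hv : (j : ℕ) = i := by omega
        have : j = ⟨i, hi⟩ := Fin.ext (by simpa using hv)
        rw [this]; exact h0
    · intro h
      refine h.2 ⟨i, hi⟩ ?_
      simp
  have h1 := LinearMap.finrank_range_add_finrank_ker φ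
  have h2 : Module.finrank F (LinearMap.ker φ) = Module.finrank F (futureCode C (i + 1)) := by
    rw [hker]
    exact (Submodule.comapSubtypeEquivOfLe (futureCode_mono C i)).finrank_eq
  have h3 : Module.finrank F (LinearMap.range φ) ≤ 1 := by
    have := Submodule.finrank_le (LinearMap.range φ)
    simpa using this
  omega

lemma combined_step (C : Submodule F (Fin n → F)) (hC : FormallySelfOrthogonal C)
    (i : ℕ) (hi : i < n) :
    (Module.finrank F (pastCode C (i + 1)) : ℤ) + Module.finrank F (futureCode C i)
      ≤ (Module.finrank F (pastCode C i) : ℤ) + Module.finrank F (futureCode C (i + 1)) + 1 := by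
  classical
  set i₀ : Fin n := ⟨i, hi⟩
  by_cases h : ∀ c ∈ pastCode C (i + 1), c i₀ = 0
  · have heq : pastCode C (i + 1) = pastCode C i := by
      apply le_antisymm
      · intro c hc
        refine ⟨hc.1, fun j hj => ?_⟩
        rcases eq_or_lt_of_le hj with h' | h'
        · have : j = i₀ := Fin.ext (by simpa using h'.symm)
          rw [this]; exact h c hc
        · exact hc.2 j (by omega)
      · exact pastCode_mono C i
    have := future_step C i hi
    rw [heq]
    omega
  · push_neg at h
    obtain ⟨c, hc, hci⟩ := h
    have heq : futureCode C i = futureCode C (i + 1) := by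
      apply le_antisymm
      · intro c' hc'
        refine ⟨hc'.1, fun j hj => ?_⟩
        rcases Nat.lt_or_ge (j : ℕ) i with h' | h'
        · exact hc'.2 j h'
        · have hji : j = i₀ := Fin.ext (show (j : ℕ) = i by omega)
          rw [hji]
          by_contra hne
          obtain ⟨x, hx, hF⟩ := hC
          obtain ⟨y, hy, hxy⟩ := hF c' hc'.1
          have hsum : ∑ j, y j * c j = 0 := hy c hc.1
          have hyi : y i₀ ≠ 0 := by
            intro h0
            apply hne
            rw [hxy]
            simp [h0]
          have : ∑ j, y j * c j = y i₀ * c i₀ := by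
            refine Finset.sum_eq_single i₀ (fun j _ hj => ?_) (by simp)
            rcases Nat.lt_or_ge (j : ℕ) i with h'' | h''
            · have : x j * y j = 0 := by
                rw [← congrFun hxy j]
                exact hc'.2 j h''
              have : y j = 0 := by
                rcases mul_eq_zero.mp this with h | h
                · exact absurd h (hx j)
                · exact h
              simp [this]
            · have hji' : i + 1 ≤ (j : ℕ) := by
                rcases eq_or_lt_of_le h'' with h3 | h3
                · exact absurd (Fin.ext (by simpa using h3.symm) : j = i₀) hj
                · omega
              simp [hc.2 j hji']
          rw [this] at hsum
          exact hci (by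
            rcases mul_eq_zero.mp hsum with h | h
            · exact absurd h hyi
            · exact h)
      · exact futureCode_mono C i
    have := past_step C i hi
    rw [heq]
    omega


/-- For a formally self-orthogonal `[n,k,d]` code with `2d ≤ n+1`,
`(p_j - p_i) + (f_i - f_j) ≤ j - i` for all `0 ≤ i ≤ j ≤ n`. -/
theorem fso_dim_inequality
    {F : Type*} [Field F] [Fintype F] [DecidableEq F] {n k d : ℕ}
    (C : Submodule F (Fin n → F)) (hk : Module.finrank F C = k)
    (hdist : ∀ c ∈ C, c ≠ 0 → d ≤ hammingNorm c)
    (hdist' : ∃ c ∈ C, c ≠ 0 ∧ hammingNorm c = d)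
    (h2d : 2 * d ≤ n + 1) (hC : FormallySelfOrthogonal C) :
    ∀ i j : ℕ, i ≤ j → j ≤ n →
      ((Module.finrank F (pastCode C j) : ℤ) - Module.finrank F (pastCode C i)) +
        ((Module.finrank F (futureCode C i) : ℤ) - Module.finrank F (futureCode C j))
        ≤ (j : ℤ) - i := by
  intro i j hij
  induction j, hij using Nat.le_induction with
  | base => intro _; simp
  | succ j hj ih =>
    intro hjn
    have h1 := ih (by omega)
    have h2 := combined_step C hC j (by omega)
    push_cast
    push_cast at h1 h2
    omega
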